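/- If ω is a closed 1-form and X a vector field on a compact oriented 2m-dimensional manifold with a nondegenerate 2-form Ω satisfying dΩ = -ω∧Ω and L_X Ω = -ω(X) Ω, then ∫_M ω(X) Ω^m = 0. -/

import Mathlib

/-- An abstract model of the graded algebra of smooth differential forms on a smooth
manifold `M`, together with the exterior derivative `d`, the space of smooth vector
fields, the Lie bracket of vector fields and the interior product.  Multiplication in
the ℝ-algebra `A` is the wedge product, and `Λ k` is the subspace of the forms which
are homogeneous of degree `k`. -/
structure FormCalculus where
  /-- The space of all (smooth, inhomogeneous) differential forms on the manifold. -/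
  A : Type*
  [ringA : Ring A]
  [algebraA : Algebra ℝ A]
  /-- `Λ k` is the space of differential forms of degree `k`. -/
  Λ : ℕ → Submodule ℝ A
  /-- The exterior derivative. -/
  d : A →ₗ[ℝ] A
  /-- The space of smooth vector fields on the manifold. -/
  Vec : Type*
  [addCommGroupVec : AddCommGroup Vec]
  [moduleVec : Module ℝ Vec]
  /-- The Lie bracket of vector fields. -/
  bracket : Vec → Vec → Vec
  /-- The interior product `iprod X θ = i(X)θ`. -/
  iprod : Vec → A →ₗ[ℝ] A
  /-- Constant functions are `0`-forms. -/
  algebraMap_mem : ∀ r : ℝ, algebraMap ℝ A r ∈ Λ 0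
  /-- The wedge product of forms of degrees `i` and `j` has degree `i + j`. -/
  mul_mem : ∀ {i j : ℕ} {a b : A}, a ∈ Λ i → b ∈ Λ j → a * b ∈ Λ (i + j)
  /-- Graded commutativity of the wedge product. -/
  gcomm : ∀ {i j : ℕ} {a b : A}, a ∈ Λ i → b ∈ Λ j →
    a * b = ((-1 : ℝ) ^ (i * j)) • (b * a)
  /-- `0`-forms (smooth functions) commute with all forms. -/
  grade0_comm : ∀ {f : A}, f ∈ Λ 0 → ∀ a : A, f * a = a * f
  /-- The exterior derivative raises degree by one. -/
  d_mem : ∀ {k : ℕ} {a : A}, a ∈ Λ k → d a ∈ Λ (k + 1)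
  /-- `d ∘ d = 0`. -/
  d_d : ∀ a : A, d (d a) = 0
  /-- The graded Leibniz rule for the exterior derivative. -/
  leibniz : ∀ {i : ℕ} (a b : A), a ∈ Λ i →
    d (a * b) = d a * b + ((-1 : ℝ) ^ i) • (a * d b)
  /-- The interior product lowers degree by one. -/
  iprod_mem : ∀ {k : ℕ} (X : Vec) {a : A}, a ∈ Λ (k + 1) → iprod X a ∈ Λ k
  /-- The interior product vanishes on `0`-forms. -/
  iprod_grade0 : ∀ (X : Vec) {f : A}, f ∈ Λ 0 → iprod X f = 0
  /-- The graded Leibniz rule for the interior product. -/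
  iprod_leibniz : ∀ {i : ℕ} (X : Vec) (a b : A), a ∈ Λ i →
    iprod X (a * b) = iprod X a * b + ((-1 : ℝ) ^ i) • (a * iprod X b)
  /-- The interior product is additive in the vector field. -/
  iprod_add : ∀ X Y : Vec, iprod (X + Y) = iprod X + iprod Y
  /-- The interior product is ℝ-homogeneous in the vector field. -/
  iprod_smul : ∀ (r : ℝ) (X : Vec), iprod (r • X) = r • iprod X
  /-- `i([X,Y]) = L_X ∘ i(Y) - i(Y) ∘ L_X`, where `L_X = d ∘ i(X) + i(X) ∘ d` is the
  Lie derivative. -/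
  iprod_bracket : ∀ X Y : Vec, iprod (bracket X Y) =
    (d ∘ₗ iprod X + iprod X ∘ₗ d) ∘ₗ iprod Y - iprod Y ∘ₗ (d ∘ₗ iprod X + iprod X ∘ₗ d)

attribute [instance] FormCalculus.ringA FormCalculus.algebraA
  FormCalculus.addCommGroupVec FormCalculus.moduleVec

/-- The Lie derivative of differential forms in the direction of a vector field,
via Cartan's magic formula `L_X = d ∘ i(X) + i(X) ∘ d`. -/
def FormCalculus.L (C : FormCalculus) (X : C.Vec) : C.A →ₗ[ℝ] C.A :=
  C.d ∘ₗ C.iprod X + C.iprod X ∘ₗ C.d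

/-- If `ω` is a closed 1-form and `X` a vector field on a compact
oriented `2m`-dimensional manifold with a nondegenerate 2-form `Ω` satisfying
`dΩ = -ω ∧ Ω` and `L_X Ω = -ω(X) Ω`, then `∫_M ω(X) Ω^m = 0`. -/
theorem integral_vanishes (C : FormCalculus) (m : ℕ) (hm : 2 ≤ m)
    (ω Ω : C.A) (hω : ω ∈ C.Λ 1) (hωclosed : C.d ω = 0) (hΩ : Ω ∈ C.Λ 2)
    -- `Ω` is nondegenerate:
    (hnd : ∀ τ ∈ C.Λ 1, ∃! Y : C.Vec, C.iprod Y Ω = τ)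
    (hdΩ : C.d Ω = -(ω * Ω))
    (X : C.Vec) (hLX : C.L X Ω = -(C.iprod X ω * Ω))
    -- the manifold has dimension `2m`, so there are no nonzero forms of higher degree:
    (htop : ∀ a ∈ C.Λ (2 * m + 1), a = 0)
    -- integration of forms over the compact oriented manifold `M`; by Stokes' theorem
    -- the integral of an exact form vanishes:
    (integral : C.A →ₗ[ℝ] ℝ) (hStokes : ∀ a : C.A, integral (C.d a) = 0) :
    integral (C.iprod X ω * Ω ^ m) = 0 := by
  obtain ⟨n, rfl⟩ : ∃ n, m = n + 1 := ⟨m - 1, by omega⟩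
  set f := C.iprod X ω with hf
  set θ := C.iprod X Ω with hθdef
  have hθ1 : θ ∈ C.Λ 1 := C.iprod_mem X hΩ
  have h1mem : (1 : C.A) ∈ C.Λ 0 := by simpa using C.algebraMap_mem 1
  -- d 1 = 0
  have hd1 : C.d (1 : C.A) = 0 := by
    have := C.leibniz (1 : C.A) (1 : C.A) h1mem
    simp only [one_mul, mul_one, pow_zero, one_smul] at this
    have h2 : C.d 1 = C.d 1 + C.d 1 := this
    have := congrArg (fun x => x - C.d 1) h2
    simpa using this.symm
  -- powers of Ω live in even degree
  have hΩpow : ∀ k : ℕ, Ω ^ k ∈ C.Λ (2 * k) := by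
    intro k
    induction k with
    | zero => simpa using h1mem
    | succ k ih =>
      have h := C.mul_mem hΩ ih
      have : 2 + 2 * k = 2 * (k + 1) := by ring
      rw [this] at h
      rwa [pow_succ']
  -- Ω commutes with 1-forms
  have hcomm1 : ∀ {τ : C.A}, τ ∈ C.Λ 1 → Ω * τ = τ * Ω := by
    intro τ hτ
    have := C.gcomm hΩ hτ
    norm_num at this
    exact this
  -- anticommutation of 1-forms
  have hanti : θ * ω = -(ω * θ) := by
    have := C.gcomm hθ1 hω
    norm_num at this
    exact this
  -- d of powers of Ω
  have hdpow : ∀ k : ℕ, C.d (Ω ^ k) = -((k : ℝ) • (ω * Ω ^ k)) := by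
    intro k
    induction k with
    | zero => simp [hd1]
    | succ k ih =>
      have hc : Ω * (ω * Ω ^ k) = ω * (Ω * Ω ^ k) := by
        rw [← mul_assoc, hcomm1 hω, mul_assoc]
      rw [pow_succ', C.leibniz Ω (Ω ^ k) hΩ, hdΩ, ih]
      push_cast
      rw [neg_one_sq, one_smul, mul_neg, mul_smul_comm, hc, neg_mul, mul_assoc]
      module
  -- interior product of powers of Ω
  have hipow : ∀ k : ℕ, C.iprod X (Ω ^ (k + 1)) = ((k : ℝ) + 1) • (θ * Ω ^ k) := by
    intro k
    induction k with
    | zero => simp [hθdef]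
    | succ k ih =>
      rw [pow_succ', C.iprod_leibniz X Ω (Ω ^ (k + 1)) hΩ, ih, ← hθdef]
      have hΩθΩ : Ω * (θ * Ω ^ k) = θ * Ω ^ (k + 1) := by
        rw [← mul_assoc, hcomm1 hθ1, mul_assoc, ← pow_succ']
      rw [mul_smul_comm, hΩθΩ]
      push_cast
      rw [neg_one_sq, one_smul]
      module
  -- dθ = -(ω * θ)
  have hdθ : C.d θ = -(ω * θ) := by
    have hL : C.L X Ω = C.d θ + C.iprod X (C.d Ω) := rfl
    rw [hLX] at hL
    have hiX : C.iprod X (C.d Ω) = -(f * Ω) + ω * θ := by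
      rw [hdΩ, map_neg, C.iprod_leibniz X ω Ω hω, ← hf, ← hθdef]
      simp only [pow_one, neg_one_smul, neg_add_rev, neg_neg]
      abel
    rw [hiX] at hL
    have h2 := congrArg (fun x => x - (-(f * Ω) + ω * θ)) hL
    simp only [add_sub_cancel_right] at h2
    rw [← h2]; abel
  -- ω * Ω^(n+1) = 0 (top degree + 1)
  have htopzero : ω * Ω ^ (n + 1) = 0 := by
    apply htop
    have h := C.mul_mem hω (hΩpow (n + 1))
    rwa [show 1 + 2 * (n + 1) = 2 * (n + 1) + 1 by ring] at h
  -- f * Ω^(n+1) = (n+1) • (ω * (θ * Ω^n))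
  have hkey : f * Ω ^ (n + 1) = ((n : ℝ) + 1) • (ω * (θ * Ω ^ n)) := by
    have h := C.iprod_leibniz X ω (Ω ^ (n + 1)) hω
    rw [htopzero, map_zero, hipow n, ← hf] at h
    simp only [pow_one, neg_one_smul, mul_smul_comm] at h
    have := congrArg (fun x => x + ((n : ℝ) + 1) • (ω * (θ * Ω ^ n))) h.symm
    simpa using this
  -- d(θ * Ω^n) = -(n+1) • (ω * (θ * Ω^n))
  have hdθΩ : C.d (θ * Ω ^ n) = -(((n : ℝ) + 1) • (ω * (θ * Ω ^ n))) := by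
    rw [C.leibniz θ (Ω ^ n) hθ1, hdθ, hdpow n]
    simp only [pow_one, neg_one_smul, mul_neg, mul_smul_comm, neg_neg]
    rw [← mul_assoc, hanti]
    simp only [neg_mul, smul_neg, mul_assoc]
    rw [show ((n : ℝ) + 1) = 1 + (n : ℝ) by ring, add_smul, one_smul]
    abel
  -- conclude
  rw [hkey, ← neg_neg (((n : ℝ) + 1) • (ω * (θ * Ω ^ n))), ← hdθΩ]
  rw [map_neg, hStokes]
  simp
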